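/- arXiv:2012.12492 — 2 statements merged into one kernel-verified Lean document; each statement's English description precedes it below -/
import Mathlib

section
/- For every k ≥ 1, the power 3^k is a perfect totient number: the sum ∑_{i=1}^{R(3^k)} φ^[i](3^k) equals 3^k. -/
/-- `R n` is the least `k ≥ 1` with `φ^[k] n = 1`. -/
noncomputable def R (n : ℕ) : ℕ := sInf {k : ℕ | 1 ≤ k ∧ Nat.totient^[k] n = 1}

lemma totient_two_mul_three_pow (m : ℕ) (hm : 1 ≤ m) :
    Nat.totient (2 * 3 ^ m) = 2 * 3 ^ (m - 1) := by
  rw [Nat.totient_mul (by simp [Nat.Coprime, Nat.coprime_pow_right_iff hm]),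
    Nat.totient_prime_pow (by norm_num) hm]
  norm_num [Nat.totient_two]
  ring

lemma iter_totient_three_pow (k i : ℕ) (h1 : 1 ≤ i) (h2 : i ≤ k) :
    Nat.totient^[i] (3 ^ k) = 2 * 3 ^ (k - i) := by
  induction i with
  | zero => omega
  | succ i ih =>
    rcases Nat.eq_zero_or_pos i with hi | hi
    · subst hi
      have := Nat.totient_prime_pow (p := 3) (n := k) (by norm_num) (by omega)
      simpa [Nat.mul_comm] using this
    · rw [Function.iterate_succ_apply', ih hi (by omega),
        totient_two_mul_three_pow _ (by omega)]
      have : k - i - 1 = k - (i + 1) := by omega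
      rw [this]

lemma R_three_pow (k : ℕ) (hk : 1 ≤ k) : R (3 ^ k) = k + 1 := by
  unfold R
  have hmem : k + 1 ∈ {m : ℕ | 1 ≤ m ∧ Nat.totient^[m] (3 ^ k) = 1} := by
    constructor
    · omega
    · rw [Function.iterate_succ_apply', iter_totient_three_pow k k hk le_rfl]
      simp
  refine le_antisymm (Nat.sInf_le hmem) ?_
  by_contra h
  push_neg at h
  obtain ⟨hm1, hm2⟩ := Nat.sInf_mem (⟨k + 1, hmem⟩ :
    Set.Nonempty {m : ℕ | 1 ≤ m ∧ Nat.totient^[m] (3 ^ k) = 1})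
  rw [iter_totient_three_pow k _ hm1 (by omega)] at hm2
  omega

lemma geom_aux (k : ℕ) : 2 * ∑ i ∈ Finset.range k, 3 ^ i = 3 ^ k - 1 := by
  induction k with
  | zero => simp
  | succ k ih =>
    rw [Finset.sum_range_succ, Nat.mul_add, ih, pow_succ]
    have : 1 ≤ 3 ^ k := Nat.one_le_pow _ _ (by norm_num)
    omega

theorem three_pow_perfect_totient (k : ℕ) (hk : 1 ≤ k) :
    ∑ i ∈ Finset.Icc 1 (R (3 ^ k)), Nat.totient^[i] (3 ^ k) = 3 ^ k := by
  rw [R_three_pow k hk]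
  rw [Finset.sum_Icc_succ_top (by omega)]
  have h1 : Nat.totient^[k + 1] (3 ^ k) = 1 := by
    rw [Function.iterate_succ_apply', iter_totient_three_pow k k hk le_rfl]
    simp
  have h2 : ∑ i ∈ Finset.Icc 1 k, Nat.totient^[i] (3 ^ k)
      = ∑ i ∈ Finset.Icc 1 k, 2 * 3 ^ (k - i) :=
    Finset.sum_congr rfl fun i hi => by
      simp only [Finset.mem_Icc] at hi
      exact iter_totient_three_pow k i hi.1 hi.2
  rw [h1, h2, show Finset.Icc 1 k = Finset.Ico 1 (k + 1) by rfl,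
    Finset.sum_Ico_eq_sum_range]
  have h3 : ∑ i ∈ Finset.range (k + 1 - 1), 2 * 3 ^ (k - (1 + i))
      = ∑ i ∈ Finset.range k, 2 * 3 ^ (k - 1 - i) := by
    simp only [Nat.add_sub_cancel]
    exact Finset.sum_congr rfl fun i _ => by rw [show k - (1 + i) = k - 1 - i by omega]
  rw [h3, ← Finset.sum_range_reflect]
  have h4 : ∑ j ∈ Finset.range k, 2 * 3 ^ (k - 1 - (k - 1 - j))
      = 2 * ∑ j ∈ Finset.range k, 3 ^ j := by
    rw [Finset.mul_sum]
    exact Finset.sum_congr rfl fun j hj => by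
      simp only [Finset.mem_range] at hj
      rw [show k - 1 - (k - 1 - j) = j by omega]
  rw [h4, geom_aux]
  have : 1 ≤ 3 ^ k := Nat.one_le_pow _ _ (by norm_num)
  omega
end

section
/- If p is an odd prime and p^k (k ≥ 1) is a perfect totient number, then p = 3. -/
open Finset

lemma exists_iter_one : ∀ n : ℕ, 1 ≤ n → ∃ k, 1 ≤ k ∧ Nat.totient^[k] n = 1 := by
  intro n
  induction n using Nat.strong_induction_on with
  | _ n ih =>
    intro hn
    rcases Nat.lt_or_ge n 3 with h | h
    · interval_cases n
      · exact ⟨1, le_refl 1, by decide⟩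
      · exact ⟨1, le_refl 1, by decide⟩
    · have h1 : Nat.totient n < n := Nat.totient_lt n (by omega)
      have h2 : 1 ≤ Nat.totient n := Nat.totient_pos.mpr (by omega)
      obtain ⟨j, hj1, hj2⟩ := ih (Nat.totient n) h1 h2
      exact ⟨j + 1, by omega, by rw [Function.iterate_succ_apply]; exact hj2⟩

lemma R_spec (n : ℕ) (hn : 1 ≤ n) : 1 ≤ R n ∧ Nat.totient^[R n] n = 1 := by
  have : ∃ k, k ∈ {k : ℕ | 1 ≤ k ∧ Nat.totient^[k] n = 1} := exists_iter_one n hn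
  exact Nat.sInf_mem this

lemma R_succ (n : ℕ) (hn : 1 ≤ n) (h : Nat.totient n ≠ 1) :
    R n = R (Nat.totient n) + 1 := by
  have hm : 1 ≤ Nat.totient n := Nat.totient_pos.mpr hn
  obtain ⟨h1, h2⟩ := R_spec (Nat.totient n) hm
  obtain ⟨g1, g2⟩ := R_spec n hn
  apply le_antisymm
  · apply Nat.sInf_le
    exact ⟨by omega, by rw [Function.iterate_succ_apply]; exact h2⟩
  · have hR1 : R n ≠ 1 := by
      intro e
      apply h
      rw [e] at g2
      simpa using g2
    have h2' : 2 ≤ R n := by omega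
    have hle : R (Nat.totient n) ≤ R n - 1 := by
      apply Nat.sInf_le
      refine ⟨by omega, ?_⟩
      have hR : R n - 1 + 1 = R n := by omega
      have hg := g2
      rw [← hR, Function.iterate_succ_apply] at hg
      exact hg
    omega

lemma sum_shift (n K : ℕ) :
    ∑ i ∈ Icc 1 K, Nat.totient^[i] n
      = ∑ j ∈ range K, Nat.totient^[j] (Nat.totient n) := by
  rw [← Finset.Ico_add_one_right_eq_Icc, Finset.sum_Ico_eq_sum_range]
  simp only [Nat.add_sub_cancel, Nat.succ_sub_one]
  refine Finset.sum_congr rfl fun j _ => ?_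
  rw [add_comm, Function.iterate_succ_apply]

theorem prime_pow_perfect_totient (p k : ℕ) (hp : p.Prime) (hodd : Odd p) (hk : 1 ≤ k)
    (hptn : ∑ i ∈ Finset.Icc 1 (R (p ^ k)), Nat.totient^[i] (p ^ k) = p ^ k) :
    p = 3 := by
  by_contra hne
  have hp5 : 5 ≤ p := by
    obtain ⟨m, rfl⟩ := hodd
    have := hp.two_le
    omega
  have hppos : 0 < p := by omega
  have hn1 : 1 ≤ p ^ k := Nat.one_le_pow _ _ hppos
  have hφ : Nat.totient (p ^ k) = p ^ (k - 1) * (p - 1) :=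
    Nat.totient_prime_pow hp (by omega)
  have hq1 : 1 ≤ p ^ (k - 1) := Nat.one_le_pow _ _ hppos
  have hφne : Nat.totient (p ^ k) ≠ 1 := by
    rw [hφ]
    have : p - 1 ≤ p ^ (k - 1) * (p - 1) := Nat.le_mul_of_pos_left _ hq1
    omega
  have hm1 : 1 ≤ Nat.totient (p ^ k) := Nat.totient_pos.mpr hn1
  rw [sum_shift, R_succ (p ^ k) hn1 hφne, Finset.sum_range_succ'] at hptn
  simp only [Function.iterate_zero_apply] at hptn
  -- hptn : (∑ j ∈ range (R φ(p^k)), φ^[j+1] φ(p^k)) + φ(p^k) = p ^ k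
  obtain ⟨hRm1, -⟩ := R_spec (Nat.totient (p ^ k)) hm1
  have hlow : Nat.totient (Nat.totient (p ^ k)) ≤
      ∑ j ∈ range (R (Nat.totient (p ^ k))), Nat.totient^[j + 1] (Nat.totient (p ^ k)) := by
    have h0 : (0 : ℕ) ∈ range (R (Nat.totient (p ^ k))) := by
      simp only [Finset.mem_range]; omega
    have := Finset.single_le_sum
      (f := fun j => Nat.totient^[j + 1] (Nat.totient (p ^ k)))
      (fun i _ => Nat.zero_le _) h0
    simpa using this
  have key : Nat.totient (Nat.totient (p ^ k)) + Nat.totient (p ^ k) ≤ p ^ k := by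
    omega
  have htot2 : 2 ≤ Nat.totient (p - 1) := by
    have hev : Even (Nat.totient (p - 1)) := Nat.totient_even (by omega)
    have hpos : 0 < Nat.totient (p - 1) := Nat.totient_pos.mpr (by omega)
    obtain ⟨r, hr⟩ := hev
    omega
  rcases Nat.lt_or_ge k 2 with hk1 | hk2
  · -- k = 1
    have hkeq : k = 1 := by omega
    subst hkeq
    have e : Nat.totient (p ^ 1) = p - 1 := by rw [hφ]; simp
    rw [e, pow_one] at key
    omega
  · -- k ≥ 2
    have hcop : Nat.Coprime (p ^ (k - 1)) (p - 1) := by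
      apply Nat.Coprime.pow_left
      have hnd : ¬ p ∣ (p - 1) := by
        intro hd
        have := Nat.le_of_dvd (by omega) hd
        omega
      exact (Nat.Prime.coprime_iff_not_dvd hp).mpr hnd
    have hkk : k - 1 - 1 = k - 2 := by omega
    have hφm : Nat.totient (Nat.totient (p ^ k)) =
        p ^ (k - 2) * (p - 1) * Nat.totient (p - 1) := by
      rw [hφ, Nat.totient_mul hcop,
        Nat.totient_prime_pow hp (show 0 < k - 1 by omega), hkk]
    have e1 : p ^ (k - 1) = p ^ (k - 2) * p := by
      rw [← pow_succ]; congr 1; omega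
    have e2 : p ^ k = p ^ (k - 2) * p * p := by
      rw [← pow_succ, ← pow_succ]; congr 1; omega
    rw [hφm, hφ, e1, e2] at key
    -- key : p^(k-2)*(p-1)*φ(p-1) + p^(k-2)*p*(p-1) ≤ p^(k-2)*p*p
    have hq : 1 ≤ p ^ (k - 2) := Nat.one_le_pow _ _ hppos
    have step1 : p ^ (k - 2) * (p - 1) * 2 ≤
        p ^ (k - 2) * (p - 1) * Nat.totient (p - 1) :=
      Nat.mul_le_mul le_rfl htot2
    have key2 : p ^ (k - 2) * (p - 1) * 2 + p ^ (k - 2) * p * (p - 1) ≤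
        p ^ (k - 2) * p * p :=
      le_trans (Nat.add_le_add_right step1 _) key
    obtain ⟨d, hdp⟩ : ∃ d, p = d + 5 := ⟨p - 5, by omega⟩
    have hd1 : p - 1 = d + 4 := by omega
    rw [hd1] at key2
    rw [hdp] at key2 hq
    nlinarith [key2, hq, Nat.zero_le d]
end
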